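/- Let f : [0,1] → ℝ be three times continuously differentiable with |f''(x)| ≥ m for some m > 0 and all x ∈ [0,1]. For each Farey interval I = [c/d, a/b], set t_I(s) := |T_I(f)|^s − ( |f''(a/b)| / (2·b·d·(b+d)) )^s. Then the series ∑_I t_I(s), taken over all Farey intervals in [0,1], converges absolutely for every s with Re(s) > 1/2, and the function s ↦ ∑_I t_I(s) is holomorphic on the open half-plane {s ∈ ℂ : Re(s) > 1/2}. -/

import Mathlib

/-- A Farey interval `[c/d, a/b] ⊆ [0,1]`: nonnegative integers `a ≤ b`, `c ≤ d` with
`b, d ≥ 1`, `gcd(a,b) = gcd(c,d) = 1` and `ad - bc = 1`. -/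
structure FareyPair : Type where
  a : ℕ
  b : ℕ
  c : ℕ
  d : ℕ
  hb : 1 ≤ b
  hd : 1 ≤ d
  hab : a ≤ b
  hcd : c ≤ d
  cop_ab : Nat.Coprime a b
  cop_cd : Nat.Coprime c d
  uni : a * d = b * c + 1

/-- The normalized Hata coefficient `T_I(f)` of a Farey interval `I = [c/d, a/b]`. -/
noncomputable def TI (f : ℝ → ℝ) (I : FareyPair) : ℝ :=
  ((I.b : ℝ) + I.d) *
    (f (((I.a : ℝ) + I.c) / ((I.b : ℝ) + I.d))
      - ((I.b : ℝ) / ((I.b : ℝ) + I.d)) * f ((I.a : ℝ) / I.b)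
      - ((I.d : ℝ) / ((I.b : ℝ) + I.d)) * f ((I.c : ℝ) / I.d))

/-- The second derivative of `f` on `[0,1]`, taken in the sense of `derivWithin`. -/
noncomputable def secondDerivOn (f : ℝ → ℝ) : ℝ → ℝ :=
  derivWithin (derivWithin f (Set.Icc 0 1)) (Set.Icc 0 1)

section FareyProofAux


open Set

namespace FareyAux

noncomputable def F1 (f : ℝ → ℝ) : ℝ → ℝ := derivWithin f (Set.Icc 0 1)

noncomputable def F2 (f : ℝ → ℝ) : ℝ → ℝ :=
  derivWithin (derivWithin f (Set.Icc 0 1)) (Set.Icc 0 1)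

lemma uD : UniqueDiffOn ℝ (Set.Icc (0:ℝ) 1) := uniqueDiffOn_Icc one_pos

variable {f : ℝ → ℝ}

lemma contDiff_F1 (hf : ContDiffOn ℝ 3 f (Set.Icc 0 1)) :
    ContDiffOn ℝ 2 (F1 f) (Set.Icc 0 1) := hf.derivWithin uD (by norm_num)

lemma contDiff_F2 (hf : ContDiffOn ℝ 3 f (Set.Icc 0 1)) :
    ContDiffOn ℝ 1 (F2 f) (Set.Icc 0 1) := (contDiff_F1 hf).derivWithin uD (by norm_num)

lemma hasDerivAt_f (hf : ContDiffOn ℝ 3 f (Set.Icc 0 1)) {x : ℝ} (hx : x ∈ Set.Ioo (0:ℝ) 1) :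
    HasDerivAt f (F1 f x) x := by
  have hmem : Set.Icc (0:ℝ) 1 ∈ nhds x := Icc_mem_nhds hx.1 hx.2
  have hd : DifferentiableAt ℝ f x :=
    ((hf.differentiableOn (by norm_num)) x (Ioo_subset_Icc_self hx)).differentiableAt hmem
  have h : F1 f x = deriv f x := derivWithin_of_mem_nhds hmem
  rw [h]; exact hd.hasDerivAt

lemma hasDerivAt_F1 (hf : ContDiffOn ℝ 3 f (Set.Icc 0 1)) {x : ℝ} (hx : x ∈ Set.Ioo (0:ℝ) 1) :
    HasDerivAt (F1 f) (F2 f x) x := by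
  have hmem : Set.Icc (0:ℝ) 1 ∈ nhds x := Icc_mem_nhds hx.1 hx.2
  have hd : DifferentiableAt ℝ (F1 f) x :=
    (((contDiff_F1 hf).differentiableOn (by norm_num)) x (Ioo_subset_Icc_self hx)).differentiableAt hmem
  have h : F2 f x = deriv (F1 f) x := derivWithin_of_mem_nhds hmem
  rw [h]; exact hd.hasDerivAt

/-- Quadratic-interpolation mean value theorem via double Rolle. -/
lemma quad_mvt (hf : ContDiffOn ℝ 3 f (Set.Icc 0 1)) {p r q : ℝ}
    (hp : 0 ≤ p) (hpr : p < r) (hrq : r < q) (hq : q ≤ 1) :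
    ∃ ξ ∈ Set.Icc p q,
      f r - ((r - p)/(q - p)) * f q - ((q - r)/(q - p)) * f p
        = -((r - p) * (q - r) / 2) * F2 f ξ := by
  have hpq : p < q := hpr.trans hrq
  have hrp0 : (0:ℝ) < r - p := by linarith
  have hqr0 : (0:ℝ) < q - r := by linarith
  have hqp0 : (0:ℝ) < q - p := by linarith
  set D := f r - ((r - p)/(q - p)) * f q - ((q - r)/(q - p)) * f p with hD
  set K := D / (-((r - p) * (q - r))) with hKdef
  have hDK : D = -((r - p) * (q - r)) * K := by
    rw [hKdef]; field_simp
  set g : ℝ → ℝ := fun t =>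
    f t - (f p + ((f q - f p)/(q - p)) * (t - p) + K * ((t - p) * (t - q))) with hg
  set g' : ℝ → ℝ := fun t =>
    F1 f t - ((f q - f p)/(q - p) + K * ((t - q) + (t - p))) with hg'
  have hfc : ContinuousOn f (Set.Icc 0 1) := hf.continuousOn
  have hsub : Set.Icc p q ⊆ Set.Icc 0 1 := Icc_subset_Icc hp hq
  have hgc : ContinuousOn g (Set.Icc p q) :=
    (hfc.mono hsub).sub (Continuous.continuousOn (by fun_prop))
  have hgd : ∀ t ∈ Set.Ioo p q, HasDerivAt g (g' t) t := by
    intro t ht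
    have h1 : HasDerivAt f (F1 f t) t :=
      hasDerivAt_f hf ⟨lt_of_le_of_lt hp ht.1, lt_of_lt_of_le ht.2 hq⟩
    have ha : HasDerivAt (fun t : ℝ => t - p) 1 t := (hasDerivAt_id t).sub_const p
    have hb : HasDerivAt (fun t : ℝ => t - q) 1 t := (hasDerivAt_id t).sub_const q
    have h2 : HasDerivAt (fun t : ℝ =>
        f p + ((f q - f p)/(q - p)) * (t - p) + K * ((t - p) * (t - q)))
        ((f q - f p)/(q - p) + K * ((t - q) + (t - p))) t := by
      have h3 := ((ha.const_mul ((f q - f p)/(q - p))).const_add (f p)).add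
        ((ha.mul hb).const_mul K)
      exact h3.congr_deriv (by ring)
    exact h1.sub h2
  have hgp : g p = 0 := by simp [hg]
  have hgq : g q = 0 := by
    have hne : q - p ≠ 0 := ne_of_gt hqp0
    simp only [hg]
    field_simp
    try ring
  have hgr : g r = 0 := by
    have hne : q - p ≠ 0 := ne_of_gt hqp0
    have h4 : g r = D - K * ((r - p) * (r - q)) := by
      simp only [hg, hD]
      field_simp
      try ring
    rw [h4, hDK]; ring
  obtain ⟨u, hu, hgu⟩ := exists_hasDerivAt_eq_zero hpr
    (hgc.mono (Icc_subset_Icc le_rfl hrq.le)) (hgp.trans hgr.symm)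
    (fun x hx => hgd x ⟨hx.1, hx.2.trans hrq⟩)
  obtain ⟨v, hv, hgv⟩ := exists_hasDerivAt_eq_zero hrq
    (hgc.mono (Icc_subset_Icc hpr.le le_rfl)) (hgr.trans hgq.symm)
    (fun x hx => hgd x ⟨hpr.trans hx.1, hx.2⟩)
  have huv : u < v := hu.2.trans hv.1
  have huv01 : Set.Icc u v ⊆ Set.Icc 0 1 :=
    Icc_subset_Icc (by linarith [hu.1]) (by linarith [hv.2])
  have hg'c : ContinuousOn g' (Set.Icc u v) := by
    apply ContinuousOn.sub
    · exact (contDiff_F1 hf).continuousOn.mono huv01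
    · exact Continuous.continuousOn (by fun_prop)
  have hg'd : ∀ t ∈ Set.Ioo u v, HasDerivAt g' (F2 f t - K * 2) t := by
    intro t ht
    have ht01 : t ∈ Set.Ioo (0:ℝ) 1 :=
      ⟨by linarith [hu.1, ht.1], by linarith [hv.2, ht.2]⟩
    have h1 : HasDerivAt (F1 f) (F2 f t) t := hasDerivAt_F1 hf ht01
    have h2 : HasDerivAt (fun t : ℝ => (f q - f p)/(q - p) + K * ((t - q) + (t - p)))
        (K * 2) t := by
      have hb := (((hasDerivAt_id t).sub_const q).add ((hasDerivAt_id t).sub_const p))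
      have h3 := (hb.const_mul K).const_add ((f q - f p)/(q - p))
      exact h3.congr_deriv (by ring)
    exact h1.sub h2
  obtain ⟨ξ, hξ, h0⟩ := exists_hasDerivAt_eq_zero huv hg'c (hgu.trans hgv.symm) hg'd
  refine ⟨ξ, ⟨by linarith [hu.1, hξ.1], by linarith [hv.2, hξ.2]⟩, ?_⟩
  have h2K : F2 f ξ = K * 2 := by linarith
  rw [hDK, h2K]; ring

end FareyAux

open Set

namespace FareyAux2

lemma rpow_le_max {c e e1 e2 : ℝ} (hc : 0 < c) (h1 : e1 ≤ e) (h2 : e ≤ e2) :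
    c ^ e ≤ max (c ^ e1) (c ^ e2) := by
  rcases le_or_gt 1 c with h | h
  · exact le_max_of_le_right (Real.rpow_le_rpow_of_exponent_le h h2)
  · exact le_max_of_le_left (Real.rpow_le_rpow_of_exponent_ge hc h.le h1)

lemma cpow_diff_norm_le {A B x y : ℝ} (hA : 0 < A)
    (hx : x ∈ Set.Icc A B) (hy : y ∈ Set.Icc A B) {s : ℂ} (hs : s ≠ 0) :
    ‖(x:ℂ) ^ s - (y:ℂ) ^ s‖ ≤ ‖s‖ * max (A ^ (s.re - 1)) (B ^ (s.re - 1)) * |x - y| := by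
  have hs1 : s - 1 ≠ -1 := by
    intro h
    apply hs
    have := congrArg (· + 1) h
    simpa using this
  have key : ∀ t ∈ Set.Icc A B,
      HasDerivWithinAt (fun t : ℝ => (t:ℂ) ^ s) (s * (t:ℂ) ^ (s - 1)) (Set.Icc A B) t := by
    intro t ht
    have ht0 : (0:ℝ) < t := lt_of_lt_of_le hA ht.1
    have h1 := hasDerivAt_ofReal_cpow_const' (ne_of_gt ht0) hs1
    simp only [sub_add_cancel] at h1
    have h2 := h1.const_mul s
    have h3 : (fun y : ℝ => s * ((y:ℂ) ^ s / s)) = fun y : ℝ => (y:ℂ) ^ s := by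
      funext z
      field_simp
    rw [h3] at h2
    exact h2.hasDerivWithinAt
  have bound : ∀ t ∈ Set.Icc A B,
      ‖s * (t:ℂ) ^ (s - 1)‖ ≤ ‖s‖ * max (A ^ (s.re - 1)) (B ^ (s.re - 1)) := by
    intro t ht
    have ht0 : (0:ℝ) < t := lt_of_lt_of_le hA ht.1
    have h1 : ‖(t:ℂ) ^ (s - 1)‖ = t ^ (s.re - 1) := by
      rw [Complex.norm_cpow_eq_rpow_re_of_pos ht0]
      norm_num
    rw [norm_mul, h1]
    apply mul_le_mul_of_nonneg_left _ (norm_nonneg s)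
    rcases le_or_gt 1 s.re with h | h
    · exact le_max_of_le_right (Real.rpow_le_rpow ht0.le ht.2 (by linarith))
    · exact le_max_of_le_left (Real.rpow_le_rpow_of_nonpos hA ht.1 (by linarith))
  have := (convex_Icc A B).norm_image_sub_le_of_norm_hasDerivWithin_le key bound hy hx
  simpa [Real.norm_eq_abs] using this

end FareyAux2

namespace FareyAux3

lemma farey_ext {I J : FareyPair} (ha : I.a = J.a) (hb : I.b = J.b)
    (hc : I.c = J.c) (hd : I.d = J.d) : I = J := by
  cases I; cases J
  simp only at ha hb hc hd
  subst ha; subst hb; subst hc; subst hd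
  rfl

lemma farey_cop_bd (I : FareyPair) : Nat.Coprime I.b I.d := by
  have hb' : Nat.gcd I.b I.d ∣ I.b := Nat.gcd_dvd_left _ _
  have hd' : Nat.gcd I.b I.d ∣ I.d := Nat.gcd_dvd_right _ _
  have h2 : Nat.gcd I.b I.d ∣ I.b * I.c := hb'.mul_right _
  have h3 : Nat.gcd I.b I.d ∣ I.a * I.d := hd'.mul_left _
  rw [I.uni] at h3
  have h4 : Nat.gcd I.b I.d ∣ 1 := by
    have := Nat.dvd_sub h3 h2
    simpa using this
  exact Nat.dvd_one.mp h4

/-- Key step: with equal `b`, `d` and `a < b` on the larger side, `a`'s coincide. -/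
lemma farey_a_le {I J : FareyPair} (hb : I.b = J.b) (hd : I.d = J.d)
    (hle : I.a ≤ J.a) (hJ : J.a < J.b) : J.a ≤ I.a := by
  have hcle : I.c ≤ J.c := by
    have h1 : I.a * I.d ≤ J.a * J.d := by
      rw [hd] at *
      exact Nat.mul_le_mul_right _ hle
    rw [I.uni, J.uni, hb] at h1
    have hbpos : 0 < J.b := J.hb
    exact Nat.le_of_mul_le_mul_left (by omega) hbpos
  have key : (J.a - I.a) * I.d = I.b * (J.c - I.c) := by
    calc (J.a - I.a) * I.d = J.a * I.d - I.a * I.d := by rw [Nat.sub_mul]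
    _ = (I.b * J.c + 1) - (I.b * I.c + 1) := by
        have e1 : J.a * I.d = I.b * J.c + 1 := by rw [hd, hb]; exact J.uni
        rw [I.uni, e1]
    _ = I.b * J.c - I.b * I.c := by omega
    _ = I.b * (J.c - I.c) := by
        rcases Nat.le.dest hcle with ⟨k, hk⟩
        rw [← hk]
        simp [Nat.mul_add]
  have hdvd : I.b ∣ (J.a - I.a) * I.d := ⟨J.c - I.c, key⟩
  have hba : I.b ∣ (J.a - I.a) := (farey_cop_bd I).dvd_of_dvd_mul_right hdvd
  have hlt : J.a - I.a < I.b := by omega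
  have h0 : J.a - I.a = 0 := Nat.eq_zero_of_dvd_of_lt hba hlt
  omega

lemma farey_inj : Function.Injective
    (fun I : FareyPair => ((2 * I.b + (if I.a = I.b then 1 else 0), I.d) : ℕ × ℕ)) := by
  intro I J h
  simp only [Prod.mk.injEq] at h
  obtain ⟨h1, hd⟩ := h
  have hb : I.b = J.b ∧ (if I.a = I.b then (1:ℕ) else 0) = (if J.a = J.b then 1 else 0) := by
    by_cases hIa : I.a = I.b <;> by_cases hJa : J.a = J.b <;> simp [hIa, hJa] at h1 ⊢ <;> omega
  have hbb : I.b = J.b := hb.1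
  have ha : I.a = J.a := by
    by_cases hIa : I.a = I.b
    · by_cases hJa : J.a = J.b
      · rw [hIa, hJa, hbb]
      · exfalso; simp [hIa, hJa] at hb
    · by_cases hJa : J.a = J.b
      · exfalso; simp [hIa, hJa] at hb
      · have hI : I.a < I.b := lt_of_le_of_ne I.hab hIa
        have hJ : J.a < J.b := lt_of_le_of_ne J.hab hJa
        rcases le_total I.a J.a with hle | hle
        · exact le_antisymm hle (farey_a_le hbb hd hle hJ)
        · exact (le_antisymm hle (farey_a_le hbb.symm hd.symm hle hI)).symm
  have hc : I.c = J.c := by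
    have e1 : I.b * I.c + 1 = I.b * J.c + 1 := by
      rw [← I.uni, ha, hd, hbb]; exact J.uni
    have hbpos : 0 < I.b := I.hb
    have := Nat.eq_of_mul_eq_mul_left hbpos (by omega : I.b * I.c = I.b * J.c)
    exact this
  exact farey_ext ha hbb hc hd

lemma farey_summable {t : ℝ} (ht : 1 < t) :
    Summable (fun I : FareyPair => ((I.b : ℝ) * I.d) ^ (-t)) := by
  have hsum : Summable (fun n : ℕ => (n : ℝ) ^ (-t)) :=
    Real.summable_nat_rpow.2 (by linarith)
  have hprod : Summable (fun n : ℕ × ℕ => ((n.1 : ℝ) ^ (-t)) * ((n.2 : ℝ) ^ (-t))) :=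
    hsum.mul_of_nonneg hsum (fun n => Real.rpow_nonneg (Nat.cast_nonneg n) _)
      (fun n => Real.rpow_nonneg (Nat.cast_nonneg n) _)
  have hcomp := (hprod.comp_injective farey_inj).mul_left ((3:ℝ) ^ t)
  apply Summable.of_nonneg_of_le
    (fun I => Real.rpow_nonneg (by positivity) _) _ hcomp
  intro I
  have hb1 : (1:ℝ) ≤ (I.b : ℝ) := by exact_mod_cast I.hb
  have hd1 : (1:ℝ) ≤ (I.d : ℝ) := by exact_mod_cast I.hd
  have hflag : ((2 * I.b + (if I.a = I.b then 1 else 0) : ℕ) : ℝ) ≤ 3 * (I.b : ℝ) := by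
    by_cases hIa : I.a = I.b <;> simp [hIa] <;> push_cast <;> linarith
  have hflagpos : (0:ℝ) < ((2 * I.b + (if I.a = I.b then 1 else 0) : ℕ) : ℝ) := by
    have hbp := I.hb
    have : 0 < 2 * I.b + (if I.a = I.b then 1 else 0) := by split <;> omega
    exact_mod_cast this
  have h2 : ((3:ℝ) * I.b) ^ (-t) ≤ ((2 * I.b + (if I.a = I.b then 1 else 0) : ℕ) : ℝ) ^ (-t) :=
    Real.rpow_le_rpow_of_nonpos hflagpos hflag (by linarith)
  have h3 : ((I.b : ℝ) * I.d) ^ (-t) = (I.b : ℝ) ^ (-t) * (I.d : ℝ) ^ (-t) :=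
    Real.mul_rpow (by linarith) (by linarith)
  have h4 : ((3:ℝ) * I.b) ^ (-t) = (3:ℝ) ^ (-t) * (I.b : ℝ) ^ (-t) :=
    Real.mul_rpow (by norm_num) (by linarith)
  have h5 : (3:ℝ) ^ t * (3:ℝ) ^ (-t) = 1 := by
    rw [← Real.rpow_add (by norm_num)]
    simp
  calc ((I.b : ℝ) * I.d) ^ (-t) = (I.b : ℝ) ^ (-t) * (I.d : ℝ) ^ (-t) := h3
    _ = (3:ℝ) ^ t * (((3:ℝ) * I.b) ^ (-t) * (I.d : ℝ) ^ (-t)) := by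
        rw [h4]; rw [← mul_assoc, ← mul_assoc, h5, one_mul]
    _ ≤ (3:ℝ) ^ t * (((2 * I.b + (if I.a = I.b then 1 else 0) : ℕ) : ℝ) ^ (-t)
          * (I.d : ℝ) ^ (-t)) := by
        apply mul_le_mul_of_nonneg_left _ (by positivity)
        apply mul_le_mul_of_nonneg_right h2 (Real.rpow_nonneg (by linarith) _)

end FareyAux3

namespace FareyAux4

open FareyAux FareyAux2 FareyAux3

variable {f : ℝ → ℝ}

lemma TI_eq (hf : ContDiffOn ℝ 3 f (Set.Icc 0 1)) (I : FareyPair) :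
    ∃ ξ ∈ Set.Icc (0:ℝ) 1, |ξ - (I.a : ℝ) / I.b| ≤ 1 / ((I.b : ℝ) * I.d) ∧
      TI f I = -(F2 f ξ) / (2 * (I.b : ℝ) * (I.d : ℝ) * ((I.b : ℝ) + I.d)) := by
  have hB : (1:ℝ) ≤ (I.b : ℝ) := by exact_mod_cast I.hb
  have hD : (1:ℝ) ≤ (I.d : ℝ) := by exact_mod_cast I.hd
  have hBpos : (0:ℝ) < I.b := by linarith
  have hDpos : (0:ℝ) < I.d := by linarith
  have hBD : (0:ℝ) < (I.b : ℝ) + I.d := by linarith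
  have ha0 : (0:ℝ) ≤ (I.a : ℝ) := Nat.cast_nonneg _
  have hc0 : (0:ℝ) ≤ (I.c : ℝ) := Nat.cast_nonneg _
  have hab : (I.a : ℝ) ≤ I.b := by exact_mod_cast I.hab
  have key : (I.a : ℝ) * I.d = (I.b : ℝ) * I.c + 1 := by exact_mod_cast I.uni
  set p : ℝ := (I.c : ℝ) / I.d with hpdef
  set q : ℝ := (I.a : ℝ) / I.b with hqdef
  set r : ℝ := ((I.a : ℝ) + I.c) / ((I.b : ℝ) + I.d) with hrdef
  have hp : 0 ≤ p := div_nonneg hc0 hDpos.le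
  have hq : q ≤ 1 := by
    rw [hqdef, div_le_one hBpos]; exact hab
  have hpr : p < r := by
    rw [hpdef, hrdef, div_lt_div_iff₀ hDpos hBD]
    nlinarith
  have hrq : r < q := by
    rw [hqdef, hrdef, div_lt_div_iff₀ hBD hBpos]
    nlinarith
  obtain ⟨ξ, hξ, heq⟩ := quad_mvt hf hp hpr hrq hq
  have hqp : q - p = 1 / ((I.b : ℝ) * I.d) := by
    rw [hqdef, hpdef, div_sub_div _ _ (ne_of_gt hBpos) (ne_of_gt hDpos),
      show (I.a : ℝ) * I.d - (I.b : ℝ) * I.c = 1 by linear_combination key]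
    try ring
  have hrp : r - p = 1 / ((I.d : ℝ) * ((I.b : ℝ) + I.d)) := by
    rw [hrdef, hpdef, div_sub_div _ _ (ne_of_gt hBD) (ne_of_gt hDpos),
      show ((I.a : ℝ) + I.c) * I.d - ((I.b : ℝ) + I.d) * I.c = 1 by linear_combination key,
      mul_comm ((I.b : ℝ) + I.d) (I.d : ℝ)]
    try ring
  have hqr : q - r = 1 / ((I.b : ℝ) * ((I.b : ℝ) + I.d)) := by
    rw [hqdef, hrdef, div_sub_div _ _ (ne_of_gt hBpos) (ne_of_gt hBD),
      show (I.a : ℝ) * ((I.b : ℝ) + I.d) - (I.b : ℝ) * ((I.a : ℝ) + I.c) = 1 by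
        linear_combination key]
    try ring
  refine ⟨ξ, ⟨by linarith [hξ.1], by linarith [hξ.2]⟩, ?_, ?_⟩
  · rw [abs_le]
    constructor
    · have := hξ.1
      have h1 : -(q - p) ≤ ξ - q := by linarith
      rw [← hqp]; linarith
    · rw [← hqp]; linarith [hξ.2]
  · have hc1 : (r - p) / (q - p) = (I.b : ℝ) / ((I.b : ℝ) + I.d) := by
      rw [hrp, hqp]
      field_simp
      try ring
    have hc2 : (q - r) / (q - p) = (I.d : ℝ) / ((I.b : ℝ) + I.d) := by
      rw [hqr, hqp]
      field_simp
    have hTI : TI f I = ((I.b : ℝ) + I.d) *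
        (f r - ((r - p) / (q - p)) * f q - ((q - r) / (q - p)) * f p) := by
      rw [hc1, hc2]
      rfl
    rw [hTI, heq, hrp, hqr]
    field_simp

lemma exists_M (hf : ContDiffOn ℝ 3 f (Set.Icc 0 1)) {m : ℝ} (hm : m ≤ m) :
    ∃ M, m ≤ M ∧ ∀ x ∈ Set.Icc (0:ℝ) 1, |F2 f x| ≤ M := by
  obtain ⟨M₀, hM₀⟩ := isCompact_Icc.exists_bound_of_continuousOn (contDiff_F2 hf).continuousOn
  exact ⟨max M₀ m, le_max_right _ _, fun x hx => by
    have := hM₀ x hx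
    rw [Real.norm_eq_abs] at this
    exact this.trans (le_max_left _ _)⟩

lemma exists_L (hf : ContDiffOn ℝ 3 f (Set.Icc 0 1)) :
    ∃ L, 0 ≤ L ∧ ∀ x ∈ Set.Icc (0:ℝ) 1, ∀ y ∈ Set.Icc (0:ℝ) 1,
      |F2 f x - F2 f y| ≤ L * |x - y| := by
  obtain ⟨L₀, hL₀⟩ := isCompact_Icc.exists_bound_of_continuousOn
    (((contDiff_F2 hf).derivWithin (m := 0) uD (by norm_num)).continuousOn)
  refine ⟨max L₀ 0, le_max_right _ _, fun x hx y hy => ?_⟩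
  have := (convex_Icc (0:ℝ) 1).norm_image_sub_le_of_norm_hasDerivWithin_le
    (C := max L₀ 0) (f := F2 f) (f' := derivWithin (F2 f) (Set.Icc 0 1))
    (fun z hz => (((contDiff_F2 hf).differentiableOn (by norm_num)) z hz).hasDerivWithinAt)
    (fun z hz => (hL₀ z hz).trans (le_max_left _ _)) hy hx
  simpa [Real.norm_eq_abs] using this

lemma rpow_tail {BD N2 σ σ₁ : ℝ} (h1 : 1 ≤ BD) (h2 : BD ≤ N2) (hσ : σ₁ ≤ σ) (hσ₁ : 0 < σ₁) :
    N2 ^ (1 - σ) * ((1 / BD) / N2) ≤ BD ^ (-(1 + σ₁)) := by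
  have hBDpos : (0:ℝ) < BD := lt_of_lt_of_le one_pos h1
  have hN2pos : (0:ℝ) < N2 := hBDpos.trans_le h2
  have e1 : N2 ^ (1 - σ) = N2 * N2 ^ (-σ) := by
    rw [show (1 - σ) = 1 + -σ by ring, Real.rpow_add hN2pos, Real.rpow_one]
  calc N2 ^ (1 - σ) * ((1 / BD) / N2) = N2 ^ (-σ) / BD := by
        rw [e1]; field_simp
    _ ≤ BD ^ (-σ) / BD := by
        exact (div_le_div_iff_of_pos_right hBDpos).mpr
          (Real.rpow_le_rpow_of_nonpos hBDpos h2 (by linarith))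
    _ = BD ^ (-σ - 1) := by
        rw [show -σ - 1 = -σ + -1 by ring, Real.rpow_add hBDpos, Real.rpow_neg_one,
          div_eq_mul_inv]
    _ ≤ BD ^ (-(1 + σ₁)) := Real.rpow_le_rpow_of_exponent_le h1 (by linarith)

lemma term_bound (hf : ContDiffOn ℝ 3 f (Set.Icc 0 1)) {m : ℝ} (hm : 0 < m)
    (hlb : ∀ x ∈ Set.Icc (0:ℝ) 1, m ≤ |F2 f x|)
    {M L : ℝ} (hmM : m ≤ M) (hMb : ∀ x ∈ Set.Icc (0:ℝ) 1, |F2 f x| ≤ M)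
    (hL : 0 ≤ L)
    (hLip : ∀ x ∈ Set.Icc (0:ℝ) 1, ∀ y ∈ Set.Icc (0:ℝ) 1, |F2 f x - F2 f y| ≤ L * |x - y|)
    {σ₁ σ₂ R : ℝ} (hσ₁ : 1/2 < σ₁) (I : FareyPair) {s : ℂ}
    (h1 : σ₁ ≤ s.re) (h2 : s.re ≤ σ₂) (h3 : ‖s‖ ≤ R) :
    ‖(((|TI f I| : ℝ) : ℂ) ^ s
        - ((|F2 f ((I.a : ℝ) / I.b)|
            / (2 * (I.b : ℝ) * (I.d : ℝ) * ((I.b : ℝ) + I.d)) : ℝ) : ℂ) ^ s)‖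
      ≤ (R * max (max (m ^ (σ₁ - 1)) (m ^ (σ₂ - 1))) (max (M ^ (σ₁ - 1)) (M ^ (σ₂ - 1))) * L)
          * ((I.b : ℝ) * I.d) ^ (-(1 + σ₁)) := by
  obtain ⟨ξ, hξ, hξq, hTI⟩ := TI_eq hf I
  have hB : (1:ℝ) ≤ (I.b : ℝ) := by exact_mod_cast I.hb
  have hD : (1:ℝ) ≤ (I.d : ℝ) := by exact_mod_cast I.hd
  set N2 : ℝ := 2 * (I.b : ℝ) * (I.d : ℝ) * ((I.b : ℝ) + I.d) with hN2def
  have hb0 : (0:ℝ) < (I.b : ℝ) := by linarith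
  have hd0 : (0:ℝ) < (I.d : ℝ) := by linarith
  have hN2pos : (0:ℝ) < N2 := by rw [hN2def]; positivity
  have hBD1 : (1:ℝ) ≤ (I.b : ℝ) * I.d := by
    have := mul_le_mul hB hD zero_le_one hb0.le
    linarith
  have hBDN2 : (I.b : ℝ) * I.d ≤ N2 := by
    rw [hN2def]
    have h0 : (0:ℝ) ≤ (I.b : ℝ) * I.d := by positivity
    nlinarith [mul_nonneg h0 (by linarith : (0:ℝ) ≤ 2 * (I.b : ℝ) + 2 * (I.d : ℝ) - 1)]
  have hM0 : (0:ℝ) < M := hm.trans_le hmM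
  have hq01 : (I.a : ℝ) / I.b ∈ Set.Icc (0:ℝ) 1 := by
    constructor
    · positivity
    · rw [div_le_one (by linarith)]; exact_mod_cast I.hab
  have hxval : |TI f I| = |F2 f ξ| / N2 := by
    rw [hTI, abs_div, abs_neg, abs_of_pos hN2pos]
  have hxA : m / N2 ≤ |TI f I| := by
    rw [hxval]; exact (div_le_div_iff_of_pos_right hN2pos).mpr (hlb ξ hξ)
  have hxB : |TI f I| ≤ M / N2 := by
    rw [hxval]; exact (div_le_div_iff_of_pos_right hN2pos).mpr (hMb ξ hξ)
  have hyA : m / N2 ≤ |F2 f ((I.a : ℝ) / I.b)| / N2 :=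
    (div_le_div_iff_of_pos_right hN2pos).mpr (hlb _ hq01)
  have hyB : |F2 f ((I.a : ℝ) / I.b)| / N2 ≤ M / N2 :=
    (div_le_div_iff_of_pos_right hN2pos).mpr (hMb _ hq01)
  have hxy : |TI f I| - |F2 f ((I.a : ℝ) / I.b)| / N2 = (|F2 f ξ| - |F2 f ((I.a : ℝ) / I.b)|) / N2 := by
    rw [hxval, div_sub_div_same]
  have hdiff : abs (|TI f I| - |F2 f ((I.a : ℝ) / I.b)| / N2) ≤ (L * (1 / ((I.b : ℝ) * I.d))) / N2 := by
    rw [hxy, abs_div, abs_of_pos hN2pos]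
    apply (div_le_div_iff_of_pos_right hN2pos).mpr
    calc abs (|F2 f ξ| - |F2 f ((I.a : ℝ) / I.b)|) ≤ |F2 f ξ - F2 f ((I.a : ℝ) / I.b)| :=
          abs_abs_sub_abs_le_abs_sub _ _
      _ ≤ L * |ξ - (I.a : ℝ) / I.b| := hLip ξ hξ _ hq01
      _ ≤ L * (1 / ((I.b : ℝ) * I.d)) := mul_le_mul_of_nonneg_left hξq hL
  have hsne : s ≠ 0 := by
    intro h
    rw [h, Complex.zero_re] at h1
    linarith
  have main := cpow_diff_norm_le (A := m / N2) (B := M / N2)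
    (div_pos hm hN2pos) ⟨hxA, hxB⟩ ⟨hyA, hyB⟩ hsne
  set K : ℝ := max (max (m ^ (σ₁ - 1)) (m ^ (σ₂ - 1))) (max (M ^ (σ₁ - 1)) (M ^ (σ₂ - 1)))
    with hKdef
  have hK0 : 0 ≤ K :=
    le_trans (Real.rpow_nonneg hm.le _) ((le_max_left _ _).trans (le_max_left _ _))
  have hmaxb : max ((m / N2) ^ (s.re - 1)) ((M / N2) ^ (s.re - 1)) ≤ K * N2 ^ (1 - s.re) := by
    have hgen : ∀ c : ℝ, 0 < c → max (c ^ (σ₁ - 1)) (c ^ (σ₂ - 1)) ≤ K →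
        (c / N2) ^ (s.re - 1) ≤ K * N2 ^ (1 - s.re) := by
      intro c hc hcK
      have e1 : (c / N2) ^ (s.re - 1) = c ^ (s.re - 1) * N2 ^ (1 - s.re) := by
        rw [Real.div_rpow hc.le hN2pos.le, div_eq_mul_inv, ← Real.rpow_neg hN2pos.le,
          show -(s.re - 1) = 1 - s.re by ring]
      rw [e1]
      apply mul_le_mul_of_nonneg_right _ (Real.rpow_nonneg hN2pos.le _)
      exact (rpow_le_max hc (by linarith) (by linarith)).trans hcK
    exact max_le (hgen m hm (le_max_left _ _)) (hgen M hM0 (le_max_right _ _))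
  have hRnn : 0 ≤ R := (norm_nonneg s).trans h3
  calc ‖(((|TI f I| : ℝ) : ℂ) ^ s
        - ((|F2 f ((I.a : ℝ) / I.b)|
            / (2 * (I.b : ℝ) * (I.d : ℝ) * ((I.b : ℝ) + I.d)) : ℝ) : ℂ) ^ s)‖
      ≤ ‖s‖ * max ((m / N2) ^ (s.re - 1)) ((M / N2) ^ (s.re - 1))
          * abs (|TI f I| - |F2 f ((I.a : ℝ) / I.b)| / N2) := main
    _ ≤ R * (K * N2 ^ (1 - s.re)) * ((L * (1 / ((I.b : ℝ) * I.d))) / N2) := by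
        apply mul_le_mul _ hdiff (abs_nonneg _)
        · positivity
        · exact mul_le_mul h3 hmaxb (le_max_iff.mpr (Or.inl (Real.rpow_nonneg
            (div_pos hm hN2pos).le _))) hRnn
    _ = (R * K * L) * (N2 ^ (1 - s.re) * ((1 / ((I.b : ℝ) * I.d)) / N2)) := by ring
    _ ≤ (R * K * L) * (((I.b : ℝ) * I.d) ^ (-(1 + σ₁))) := by
        apply mul_le_mul_of_nonneg_left (rpow_tail hBD1 hBDN2 h1 (by linarith))
        positivity

lemma TI_pos (hf : ContDiffOn ℝ 3 f (Set.Icc 0 1)) {m : ℝ} (hm : 0 < m)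
    (hlb : ∀ x ∈ Set.Icc (0:ℝ) 1, m ≤ |F2 f x|) (I : FareyPair) :
    0 < |TI f I| ∧
      0 < |F2 f ((I.a : ℝ) / I.b)| / (2 * (I.b : ℝ) * (I.d : ℝ) * ((I.b : ℝ) + I.d)) := by
  obtain ⟨ξ, hξ, _, hTI⟩ := TI_eq hf I
  have hB : (1:ℝ) ≤ (I.b : ℝ) := by exact_mod_cast I.hb
  have hD : (1:ℝ) ≤ (I.d : ℝ) := by exact_mod_cast I.hd
  have hb0 : (0:ℝ) < (I.b : ℝ) := by linarith
  have hd0 : (0:ℝ) < (I.d : ℝ) := by linarith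
  have hN2pos : (0:ℝ) < 2 * (I.b : ℝ) * (I.d : ℝ) * ((I.b : ℝ) + I.d) := by positivity
  have hq01 : (I.a : ℝ) / I.b ∈ Set.Icc (0:ℝ) 1 := by
    constructor
    · positivity
    · rw [div_le_one hb0]; exact_mod_cast I.hab
  constructor
  · rw [hTI, abs_div, abs_neg, abs_of_pos hN2pos]
    exact div_pos (lt_of_lt_of_le hm (hlb ξ hξ)) hN2pos
  · exact div_pos (lt_of_lt_of_le hm (hlb _ hq01)) hN2pos

end FareyAux4

theorem stmt12' (f : ℝ → ℝ) (hf : ContDiffOn ℝ 3 f (Set.Icc 0 1))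
    (m : ℝ) (hm : 0 < m)
    (hlb : ∀ x ∈ Set.Icc (0 : ℝ) 1, m ≤ |FareyAux.F2 f x|) :
    (∀ s : ℂ, 1 / 2 < s.re →
      Summable (fun I : FareyPair =>
        ‖(((|TI f I| : ℝ) : ℂ) ^ s
          - ((|FareyAux.F2 f ((I.a : ℝ) / I.b)|
              / (2 * (I.b : ℝ) * (I.d : ℝ) * ((I.b : ℝ) + I.d)) : ℝ) : ℂ) ^ s)‖)) ∧
    DifferentiableOn ℂ
      (fun s : ℂ => ∑' I : FareyPair,
        (((|TI f I| : ℝ) : ℂ) ^ s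
          - ((|FareyAux.F2 f ((I.a : ℝ) / I.b)|
              / (2 * (I.b : ℝ) * (I.d : ℝ) * ((I.b : ℝ) + I.d)) : ℝ) : ℂ) ^ s))
      {s : ℂ | 1 / 2 < s.re} := by
  obtain ⟨M, hmM, hMb⟩ := FareyAux4.exists_M hf (le_refl m)
  obtain ⟨L, hL0, hLip⟩ := FareyAux4.exists_L hf
  constructor
  · intro s hs
    have hsum := (FareyAux3.farey_summable (t := 1 + s.re) (by linarith)).mul_left
      ((‖s‖ * max (max (m ^ (s.re - 1)) (m ^ (s.re - 1)))
        (max (M ^ (s.re - 1)) (M ^ (s.re - 1))) * L))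
    apply Summable.of_nonneg_of_le (fun I => norm_nonneg _) _ hsum
    intro I
    have hb := FareyAux4.term_bound hf hm hlb hmM hMb hL0 hLip hs I
      (le_refl s.re) (le_refl s.re) (le_refl ‖s‖)
    calc ‖_‖ ≤ _ := hb
      _ = ‖s‖ * max (max (m ^ (s.re - 1)) (m ^ (s.re - 1)))
            (max (M ^ (s.re - 1)) (M ^ (s.re - 1))) * L * ((I.b : ℝ) * I.d) ^ (-(1 + s.re)) := by
          ring
  · intro s₀ hs₀
    have hσ₀ : 1/2 < s₀.re := hs₀
    set ε : ℝ := (s₀.re - 1/2)/2 with hεdef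
    have hεpos : 0 < ε := by rw [hεdef]; linarith
    set σ₁ : ℝ := s₀.re - ε with hσ₁def
    set σ₂ : ℝ := s₀.re + ε with hσ₂def
    set R : ℝ := ‖s₀‖ + ε with hRdef
    have hσ₁half : 1/2 < σ₁ := by rw [hσ₁def, hεdef]; linarith
    have hmem : ∀ s ∈ Metric.ball s₀ ε, σ₁ ≤ s.re ∧ s.re ≤ σ₂ ∧ ‖s‖ ≤ R := by
      intro s hsb
      have hd : ‖s - s₀‖ < ε := by
        rw [← dist_eq_norm]; exact Metric.mem_ball.mp hsb
      have h1 : |(s - s₀).re| ≤ ‖s - s₀‖ := by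
        exact Complex.abs_re_le_norm _
      rw [Complex.sub_re] at h1
      have h2 : |s.re - s₀.re| < ε := lt_of_le_of_lt h1 hd
      rw [abs_lt] at h2
      have h3 : ‖s‖ - ‖s₀‖ ≤ ‖s - s₀‖ := norm_sub_norm_le _ _
      exact ⟨by rw [hσ₁def]; linarith, by rw [hσ₂def]; linarith, by rw [hRdef]; linarith⟩
    have hdiff : DifferentiableOn ℂ
        (fun w : ℂ => ∑' I : FareyPair,
          (((|TI f I| : ℝ) : ℂ) ^ w
            - ((|FareyAux.F2 f ((I.a : ℝ) / I.b)|
                / (2 * (I.b : ℝ) * (I.d : ℝ) * ((I.b : ℝ) + I.d)) : ℝ) : ℂ) ^ w))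
        (Metric.ball s₀ ε) := by
      apply Complex.differentiableOn_tsum_of_summable_norm
        (u := fun I : FareyPair =>
          (R * max (max (m ^ (σ₁ - 1)) (m ^ (σ₂ - 1))) (max (M ^ (σ₁ - 1)) (M ^ (σ₂ - 1))) * L)
            * ((I.b : ℝ) * I.d) ^ (-(1 + σ₁)))
      · exact (FareyAux3.farey_summable (t := 1 + σ₁) (by linarith)).mul_left _
      · intro I
        obtain ⟨h1, h2⟩ := FareyAux4.TI_pos hf hm hlb I
        apply DifferentiableOn.sub
        · intro w hw
          exact (differentiableAt_id.const_cpow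
            (Or.inl (Complex.ofReal_ne_zero.mpr h1.ne'))).differentiableWithinAt
        · intro w hw
          exact (differentiableAt_id.const_cpow
            (Or.inl (Complex.ofReal_ne_zero.mpr h2.ne'))).differentiableWithinAt
      · exact Metric.isOpen_ball
      · intro I w hw
        obtain ⟨hw1, hw2, hw3⟩ := hmem w hw
        exact FareyAux4.term_bound hf hm hlb hmM hMb hL0 hLip hσ₁half I hw1 hw2 hw3
    exact (hdiff.differentiableAt
      (Metric.isOpen_ball.mem_nhds (Metric.mem_ball_self hεpos))).differentiableWithinAt

end FareyProofAux

theorem stmt12 (f : ℝ → ℝ) (hf : ContDiffOn ℝ 3 f (Set.Icc 0 1))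
    (m : ℝ) (hm : 0 < m) (hlb : ∀ x ∈ Set.Icc (0 : ℝ) 1, m ≤ |secondDerivOn f x|) :
    (∀ s : ℂ, 1 / 2 < s.re →
      Summable (fun I : FareyPair =>
        ‖(((|TI f I| : ℝ) : ℂ) ^ s
          - ((|secondDerivOn f ((I.a : ℝ) / I.b)|
              / (2 * (I.b : ℝ) * (I.d : ℝ) * ((I.b : ℝ) + I.d)) : ℝ) : ℂ) ^ s)‖)) ∧
    DifferentiableOn ℂ
      (fun s : ℂ => ∑' I : FareyPair,
        (((|TI f I| : ℝ) : ℂ) ^ s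
          - ((|secondDerivOn f ((I.a : ℝ) / I.b)|
              / (2 * (I.b : ℝ) * (I.d : ℝ) * ((I.b : ℝ) + I.d)) : ℝ) : ℂ) ^ s))
      {s : ℂ | 1 / 2 < s.re} := by
  exact stmt12' f hf m hm hlb
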